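/- Let Φ : ℝⁿ → ℝ be C² strictly convex with ∇Φ a global diffeomorphism of ℝⁿ, and suppose the Hessian factors as Φ''(x) = DU(x)ᵀDU(x) for a diffeomorphism U of ℝⁿ. Define U*(ξ) = U((∇Φ)⁻¹(ξ)). Then DU*(ξ)ᵀDU*(ξ) equals the Hessian of the Fenchel conjugate Φ* at ξ, and consequently the geodesic distances agree: ‖U*(ξ₁) - U*(ξ₂)‖ = ‖U(x₁) - U(x₂)‖ whenever ξᵢ = ∇Φ(xᵢ). -/

import Mathlib

theorem conjugate_factorization_and_distance
    (n : ℕ) (Φ : EuclideanSpace ℝ (Fin n) → ℝ)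
    (hΦ : ContDiff ℝ 2 Φ) (hconv : StrictConvexOn ℝ Set.univ Φ)
    (gradΦ : EuclideanSpace ℝ (Fin n) → EuclideanSpace ℝ (Fin n))
    (hgrad : ∀ x, HasGradientAt Φ (gradΦ x) x)
    (hgradC1 : ContDiff ℝ 1 gradΦ)
    (Finv : EuclideanSpace ℝ (Fin n) → EuclideanSpace ℝ (Fin n))
    (hFinvC1 : ContDiff ℝ 1 Finv)
    (hFinv₁ : ∀ x, Finv (gradΦ x) = x)
    (hFinv₂ : ∀ ξ, gradΦ (Finv ξ) = ξ)
    (U : EuclideanSpace ℝ (Fin n) → EuclideanSpace ℝ (Fin n))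
    (hU : ContDiff ℝ 1 U) (hUbij : Function.Bijective U)
    -- DU(x)ᵀ DU(x) = Φ''(x), expressed via inner products of derivatives:
    (hfact : ∀ x, ∀ v w : EuclideanSpace ℝ (Fin n),
      (inner ℝ (fderiv ℝ U x v) (fderiv ℝ U x w) : ℝ) =
        (inner ℝ v (fderiv ℝ gradΦ x w) : ℝ)) :
    -- U*(ξ) := U (Finv ξ); its Jacobian factors the Hessian of Φ* (= fderiv Finv),
    -- and the geodesic distances agree.
    (∀ ξ, ∀ v w : EuclideanSpace ℝ (Fin n),
      (inner ℝ (fderiv ℝ (fun η => U (Finv η)) ξ v)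
             (fderiv ℝ (fun η => U (Finv η)) ξ w) : ℝ) =
        (inner ℝ v (fderiv ℝ Finv ξ w) : ℝ)) ∧
    (∀ x₁ x₂ : EuclideanSpace ℝ (Fin n),
      ‖U (Finv (gradΦ x₁)) - U (Finv (gradΦ x₂))‖ = ‖U x₁ - U x₂‖) := by
  have hFd : ∀ ξ, DifferentiableAt ℝ Finv ξ :=
    fun ξ => (hFinvC1.differentiable one_ne_zero).differentiableAt
  have hUd : ∀ x, DifferentiableAt ℝ U x :=
    fun x => (hU.differentiable one_ne_zero).differentiableAt
  have hgd : ∀ x, DifferentiableAt ℝ gradΦ x :=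
    fun x => (hgradC1.differentiable one_ne_zero).differentiableAt
  constructor
  · intro ξ v w
    set a := Finv ξ with ha
    have hcomp : fderiv ℝ (fun η => U (Finv η)) ξ =
        (fderiv ℝ U a).comp (fderiv ℝ Finv ξ) :=
      fderiv_comp ξ (hUd a) (hFd ξ)
    have hinv : ∀ u, fderiv ℝ gradΦ a (fderiv ℝ Finv ξ u) = u := by
      intro u
      have h1 : fderiv ℝ (fun η => gradΦ (Finv η)) ξ =
          (fderiv ℝ gradΦ a).comp (fderiv ℝ Finv ξ) :=
        fderiv_comp ξ (hgd a) (hFd ξ)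
      have h2 : (fun η => gradΦ (Finv η)) = id := funext hFinv₂
      rw [h2, fderiv_id] at h1
      have := congrArg (fun L => L u) h1.symm
      simpa using this
    have hsym : ∀ p q : EuclideanSpace ℝ (Fin n),
        (inner ℝ p (fderiv ℝ gradΦ a q) : ℝ) = inner ℝ (fderiv ℝ gradΦ a p) q := by
      intro p q
      rw [← hfact a p q, real_inner_comm, hfact a q p, real_inner_comm]
    rw [hcomp]
    simp only [ContinuousLinearMap.comp_apply]
    rw [hfact a]
    calc (inner ℝ (fderiv ℝ Finv ξ v) (fderiv ℝ gradΦ a (fderiv ℝ Finv ξ w)) : ℝ)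
        = inner ℝ (fderiv ℝ gradΦ a (fderiv ℝ Finv ξ v)) (fderiv ℝ Finv ξ w) := hsym _ _
      _ = inner ℝ v (fderiv ℝ Finv ξ w) := by rw [hinv]
  · intro x₁ x₂
    rw [hFinv₁, hFinv₁]
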